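/- Let Φ be a finite reduced crystallographic root system with positive system Φ^+, let β ∈ Φ^+ be a simple root, and let λ be a coweight. Then ℓ^S(s_β λ) = ℓ^S(λ) − 1 if β(λ) < 0; s_β λ = λ (so ℓ^S(s_β λ) = ℓ^S(λ)) if β(λ) = 0; and ℓ^S(s_β λ) = ℓ^S(λ) + 1 if β(λ) > 0. -/

import Mathlib

open Module

/-- A finite reduced crystallographic root system, spanning the dual of the real vector
space `V`, together with a chosen positive system.  Roots are linear functionals on `V`,
and `coroot` associates to each root its coroot in `V`. -/
structure PosRootSystem (V : Type*) [AddCommGroup V] [Module ℝ V] where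
  /-- the set of roots -/
  roots : Finset (Dual ℝ V)
  /-- the set of positive roots -/
  pos : Finset (Dual ℝ V)
  /-- the coroot of a root -/
  coroot : Dual ℝ V → V
  pos_subset : pos ⊆ roots
  mem_roots_iff : ∀ α, α ∈ roots ↔ (α ∈ pos ∨ -α ∈ pos)
  neg_not_pos : ∀ α ∈ pos, -α ∉ pos
  add_mem_pos : ∀ α ∈ pos, ∀ β ∈ pos, α + β ∈ roots → α + β ∈ pos
  root_coroot_two : ∀ α ∈ roots, α (coroot α) = 2
  crystallographic : ∀ α ∈ roots, ∀ β ∈ roots, ∃ n : ℤ, α (coroot β) = n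
  reduced : ∀ α ∈ roots, ∀ c : ℝ, c • α ∈ roots → c = 1 ∨ c = -1
  reflect_mem : ∀ α ∈ roots, ∀ β ∈ roots, α - α (coroot β) • β ∈ roots
  span_top : Submodule.span ℝ (roots : Set (Dual ℝ V)) = ⊤

namespace PosRootSystem

variable {V : Type*} [AddCommGroup V] [Module ℝ V] (P : PosRootSystem V)

/-- `x` is a coweight: every root takes an integer value on it. -/
def IsCoweight (x : V) : Prop := ∀ α ∈ P.roots, ∃ n : ℤ, α x = n

/-- The function `f(m) = -m` for `m ≤ 0` and `f(m) = m - 1` for `m > 0`. -/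
noncomputable def lenAux (m : ℝ) : ℝ := if m ≤ 0 then -m else m - 1

/-- `ℓ^S(x) = Σ_{α ∈ Φ⁺} f(α(x))`, the length of the minimal coset representative of the
translation `x` in the affine Weyl group modulo the finite Weyl group. -/
noncomputable def lS (x : V) : ℝ := ∑ α ∈ P.pos, lenAux (α x)

/-- The linear reflection `s_β x = x - β(x)·β^∨`. -/
def sRefl (β : Dual ℝ V) (x : V) : V := x - β x • P.coroot β

/-- The affine reflection `r_β x = s_β x + β^∨` in the hyperplane `β = 1`. -/
def rRefl (β : Dual ℝ V) (x : V) : V := P.sRefl β x + P.coroot β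

/-- `(α, α')` is a `β`-positive pair: `α, α'` are positive roots with `α(β^∨) < 0`
and `s_β α = α'`. -/
def IsPosPair (β α α' : Dual ℝ V) : Prop :=
  α ∈ P.pos ∧ α' ∈ P.pos ∧ α (P.coroot β) < 0 ∧ α - α (P.coroot β) • β = α'

/-- `(α, α')` is a `β`-negative pair: `α, α'` are positive roots with `s_β α = -α'`. -/
def IsNegPair (β α α' : Dual ℝ V) : Prop :=
  α ∈ P.pos ∧ α' ∈ P.pos ∧ α - α (P.coroot β) • β = -α'

/-- The opposite sign condition for `(β, x)`: the two members of every `β`-negative pair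
take values of strictly opposite signs on `x`. -/
def OppositeSignCondition (β : Dual ℝ V) (x : V) : Prop :=
  ∀ α α' : Dual ℝ V, P.IsNegPair β α α' →
    (α x < 0 ∧ 0 < α' x) ∨ (0 < α x ∧ α' x < 0)

end PosRootSystem

namespace PosRootSystem

variable {V : Type*} [AddCommGroup V] [Module ℝ V] (P : PosRootSystem V)

lemma root_ne_zero {α : Dual ℝ V} (h : α ∈ P.roots) : α ≠ 0 := by
  intro h0
  have := P.root_coroot_two α h
  rw [h0] at this
  simpa using this

lemma neg_mem_roots {α : Dual ℝ V} (h : α ∈ P.roots) : -α ∈ P.roots := by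
  rw [P.mem_roots_iff] at h ⊢
  rw [neg_neg]
  tauto

lemma finiteDim (Q : PosRootSystem V) : Module.Finite ℝ (Dual ℝ V) :=
  ⟨⟨Q.roots, Q.span_top⟩⟩

/-- The reflection `φ ↦ φ - φ(β^∨) β` on the dual space, as a linear map. -/
noncomputable def reflDual (β : Dual ℝ V) : Dual ℝ V →ₗ[ℝ] Dual ℝ V where
  toFun φ := φ - φ (P.coroot β) • β
  map_add' φ ψ := by
    simp only [LinearMap.add_apply, add_smul]
    abel
  map_smul' c φ := by
    simp only [LinearMap.smul_apply, RingHom.id_apply, smul_eq_mul, mul_smul, smul_sub]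

lemma reflDual_apply (β φ : Dual ℝ V) : P.reflDual β φ = φ - φ (P.coroot β) • β := rfl

lemma reflDual_invol {β : Dual ℝ V} (hβ : β ∈ P.roots) :
    Function.Involutive (P.reflDual β) := by
  intro φ
  have h2 : β (P.coroot β) = 2 := P.root_coroot_two β hβ
  simp only [reflDual_apply, LinearMap.sub_apply, LinearMap.smul_apply, smul_eq_mul, h2]
  module

lemma reflDual_root {β : Dual ℝ V} (hβ : β ∈ P.roots) :
    P.reflDual β β = -β := by
  have h2 : β (P.coroot β) = 2 := P.root_coroot_two β hβ
  rw [reflDual_apply, h2]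
  module

/-- The reflection as a linear equivalence. -/
noncomputable def reflE {β : Dual ℝ V} (hβ : β ∈ P.roots) :
    Dual ℝ V ≃ₗ[ℝ] Dual ℝ V :=
  LinearEquiv.ofInvolutive (P.reflDual β) (P.reflDual_invol hβ)

lemma reflE_apply {β : Dual ℝ V} (hβ : β ∈ P.roots) (φ : Dual ℝ V) :
    P.reflE hβ φ = φ - φ (P.coroot β) • β := rfl

/-- The monoid of linear automorphisms of the dual space preserving the set of roots. -/
def GS : Set (Dual ℝ V ≃ₗ[ℝ] Dual ℝ V) := {g | ∀ γ ∈ P.roots, g γ ∈ P.roots}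

lemma one_mem_GS : (1 : Dual ℝ V ≃ₗ[ℝ] Dual ℝ V) ∈ P.GS := by
  intro γ hγ
  simpa using hγ

lemma mul_mem_GS {g h : Dual ℝ V ≃ₗ[ℝ] Dual ℝ V} (hg : g ∈ P.GS) (hh : h ∈ P.GS) :
    g * h ∈ P.GS := by
  intro γ hγ
  exact hg _ (hh _ hγ)

lemma reflE_mem_GS {β : Dual ℝ V} (hβ : β ∈ P.roots) : P.reflE hβ ∈ P.GS := by
  intro γ hγ
  exact P.reflect_mem γ hγ β hβ

lemma mul_apply (g h : Dual ℝ V ≃ₗ[ℝ] Dual ℝ V) (φ : Dual ℝ V) :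
    (g * h) φ = g (h φ) := rfl

lemma reflE_sq {β : Dual ℝ V} (hβ : β ∈ P.roots) : P.reflE hβ * P.reflE hβ = 1 := by
  apply LinearEquiv.toLinearMap_injective
  apply LinearMap.ext
  intro φ
  exact P.reflDual_invol hβ φ

lemma GS_finite : P.GS.Finite := by
  rw [← Set.finite_coe_iff]
  have : Function.Injective
      (fun g : P.GS => (fun γ : {x // x ∈ P.roots} =>
        (⟨g.1 γ.1, g.2 γ.1 γ.2⟩ : {x // x ∈ P.roots}))) := by
    intro g₁ g₂ h
    apply Subtype.ext
    apply LinearEquiv.toLinearMap_injective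
    apply LinearMap.ext_on P.span_top
    intro γ hγ
    have := congrFun h ⟨γ, hγ⟩
    simpa using congrArg Subtype.val this
  exact Finite.of_injective _ this

/-- The finite set of root-preserving automorphisms. -/
noncomputable def Gfin : Finset (Dual ℝ V ≃ₗ[ℝ] Dual ℝ V) := P.GS_finite.toFinset

lemma mem_Gfin {g : Dual ℝ V ≃ₗ[ℝ] Dual ℝ V} : g ∈ P.Gfin ↔ g ∈ P.GS :=
  Set.Finite.mem_toFinset _

/-- An auxiliary positive definite symmetric bilinear form on the dual space. -/
noncomputable def B0 (Q : PosRootSystem V) : Dual ℝ V → Dual ℝ V → ℝ := fun φ ψ =>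
  letI := Q.finiteDim
  ∑ i, (Module.finBasis ℝ (Dual ℝ V)).repr φ i * (Module.finBasis ℝ (Dual ℝ V)).repr ψ i

lemma B0_symm (φ ψ : Dual ℝ V) : P.B0 φ ψ = P.B0 ψ φ := by
  unfold B0
  exact Finset.sum_congr rfl fun i _ => mul_comm _ _

lemma B0_add_left (φ φ' ψ : Dual ℝ V) : P.B0 (φ + φ') ψ = P.B0 φ ψ + P.B0 φ' ψ := by
  unfold B0
  rw [← Finset.sum_add_distrib]
  exact Finset.sum_congr rfl fun i _ => by rw [map_add]; simp [add_mul]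

lemma B0_smul_left (c : ℝ) (φ ψ : Dual ℝ V) : P.B0 (c • φ) ψ = c * P.B0 φ ψ := by
  unfold B0
  rw [Finset.mul_sum]
  exact Finset.sum_congr rfl fun i _ => by rw [map_smul]; simp [mul_assoc]

lemma B0_nonneg (φ : Dual ℝ V) : 0 ≤ P.B0 φ φ := by
  unfold B0
  exact Finset.sum_nonneg fun i _ => mul_self_nonneg _

lemma B0_pos {φ : Dual ℝ V} (h : φ ≠ 0) : 0 < P.B0 φ φ := by
  unfold B0
  letI := P.finiteDim
  have hr : (Module.finBasis ℝ (Dual ℝ V)).repr φ ≠ 0 := fun hc =>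
    h ((Module.finBasis ℝ (Dual ℝ V)).repr.map_eq_zero_iff.1 hc)
  obtain ⟨i, hi⟩ := Finsupp.ne_iff.1 hr
  apply Finset.sum_pos' (fun j _ => mul_self_nonneg _)
  refine ⟨i, Finset.mem_univ i, ?_⟩
  have hne : (Module.finBasis ℝ (Dual ℝ V)).repr φ i ≠ 0 := by simpa using hi
  exact mul_self_pos.mpr hne

/-- An invariant positive definite symmetric bilinear form on the dual space. -/
noncomputable def Bf : Dual ℝ V → Dual ℝ V → ℝ := fun φ ψ =>
  ∑ g ∈ P.Gfin, P.B0 (g φ) (g ψ)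

lemma Bf_symm (φ ψ : Dual ℝ V) : P.Bf φ ψ = P.Bf ψ φ :=
  Finset.sum_congr rfl fun g _ => P.B0_symm _ _

lemma Bf_add_left (φ φ' ψ : Dual ℝ V) : P.Bf (φ + φ') ψ = P.Bf φ ψ + P.Bf φ' ψ := by
  unfold Bf
  rw [← Finset.sum_add_distrib]
  exact Finset.sum_congr rfl fun g _ => by rw [map_add, P.B0_add_left]

lemma Bf_smul_left (c : ℝ) (φ ψ : Dual ℝ V) : P.Bf (c • φ) ψ = c * P.Bf φ ψ := by
  unfold Bf
  rw [Finset.mul_sum]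
  exact Finset.sum_congr rfl fun g _ => by rw [map_smul, P.B0_smul_left]

lemma Bf_smul_right (c : ℝ) (φ ψ : Dual ℝ V) : P.Bf φ (c • ψ) = c * P.Bf φ ψ := by
  rw [Bf_symm, Bf_smul_left, Bf_symm]

lemma Bf_add_right (φ ψ ψ' : Dual ℝ V) : P.Bf φ (ψ + ψ') = P.Bf φ ψ + P.Bf φ ψ' := by
  rw [P.Bf_symm φ (ψ + ψ'), P.Bf_add_left, P.Bf_symm ψ φ, P.Bf_symm ψ' φ]

lemma Bf_neg_right (φ ψ : Dual ℝ V) : P.Bf φ (-ψ) = -P.Bf φ ψ := by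
  rw [show (-ψ : Dual ℝ V) = (-1 : ℝ) • ψ by module, P.Bf_smul_right]
  ring

lemma Bf_sub_left (φ φ' ψ : Dual ℝ V) : P.Bf (φ - φ') ψ = P.Bf φ ψ - P.Bf φ' ψ := by
  rw [sub_eq_add_neg, P.Bf_add_left, show (-φ' : Dual ℝ V) = (-1 : ℝ) • φ' by module,
    P.Bf_smul_left]
  ring

lemma Bf_sub_right (φ ψ ψ' : Dual ℝ V) : P.Bf φ (ψ - ψ') = P.Bf φ ψ - P.Bf φ ψ' := by
  rw [P.Bf_symm φ (ψ - ψ'), P.Bf_sub_left, P.Bf_symm ψ φ, P.Bf_symm ψ' φ]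

lemma Bf_pos {φ : Dual ℝ V} (h : φ ≠ 0) : 0 < P.Bf φ φ := by
  unfold Bf
  apply Finset.sum_pos' (fun g _ => P.B0_nonneg _)
  refine ⟨1, P.mem_Gfin.2 P.one_mem_GS, ?_⟩
  simpa using P.B0_pos h

lemma Bf_invariant {β : Dual ℝ V} (hβ : β ∈ P.roots) (φ ψ : Dual ℝ V) :
    P.Bf (P.reflDual β φ) (P.reflDual β ψ) = P.Bf φ ψ := by
  unfold Bf
  refine Finset.sum_nbij' (fun g => g * P.reflE hβ) (fun g => g * P.reflE hβ)
    ?_ ?_ ?_ ?_ ?_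
  · intro g hg
    exact P.mem_Gfin.2 (P.mul_mem_GS (P.mem_Gfin.1 hg) (P.reflE_mem_GS hβ))
  · intro g hg
    exact P.mem_Gfin.2 (P.mul_mem_GS (P.mem_Gfin.1 hg) (P.reflE_mem_GS hβ))
  · intro g _
    rw [mul_assoc, P.reflE_sq hβ, mul_one]
  · intro g _
    rw [mul_assoc, P.reflE_sq hβ, mul_one]
  · intro g _
    rfl

lemma apply_coroot_mul_Bf {β : Dual ℝ V} (hβ : β ∈ P.roots) (φ : Dual ℝ V) :
    φ (P.coroot β) * P.Bf β β = 2 * P.Bf φ β := by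
  have h := P.Bf_invariant hβ φ β
  rw [P.reflDual_root hβ, P.reflDual_apply] at h
  have hexp : P.Bf (φ - φ (P.coroot β) • β) (-β)
      = -(P.Bf φ β) + φ (P.coroot β) * P.Bf β β := by
    rw [P.Bf_sub_left, P.Bf_neg_right, P.Bf_neg_right, P.Bf_smul_left]
    ring
  rw [hexp] at h
  linarith

lemma Bf_cauchy_schwarz {α β : Dual ℝ V} (hα : α ∈ P.roots) (hβ : β ∈ P.roots)
    (h1 : α ≠ β) (h2 : α ≠ -β) :
    (P.Bf α β) ^ 2 < P.Bf α α * P.Bf β β := by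
  have hβ0 : β ≠ 0 := P.root_ne_zero hβ
  have hbb : 0 < P.Bf β β := P.Bf_pos hβ0
  set w : Dual ℝ V := P.Bf β β • α - P.Bf α β • β with hw
  have hw0 : w ≠ 0 := by
    intro h0
    have : α = (P.Bf β β)⁻¹ • (P.Bf α β) • β := by
      have : P.Bf β β • α = P.Bf α β • β := by
        rw [sub_eq_zero] at h0
        exact h0
      rw [← this, smul_smul, inv_mul_cancel₀ (ne_of_gt hbb), one_smul]
    rw [smul_smul] at this
    rcases P.reduced β hβ _ (this ▸ hα) with hc | hc
    · rw [hc, one_smul] at this; exact h1 this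
    · rw [hc] at this
      apply h2
      rw [this]; module
  have hpos : 0 < P.Bf w w := P.Bf_pos hw0
  have hexp : P.Bf w w = P.Bf β β * (P.Bf α α * P.Bf β β - (P.Bf α β) ^ 2) := by
    rw [hw]
    simp only [P.Bf_sub_left, P.Bf_sub_right, P.Bf_smul_left, P.Bf_smul_right]
    rw [P.Bf_symm β α]
    ring
  rw [hexp] at hpos
  nlinarith

/-- Key lemma: if two roots pair negatively then their sum is a root. -/
lemma add_root_of_pairing_neg {α β : Dual ℝ V} (hα : α ∈ P.roots) (hβ : β ∈ P.roots)
    (h1 : α ≠ β) (h2 : α ≠ -β) (hneg : α (P.coroot β) < 0) : α + β ∈ P.roots := by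
  have hα0 : α ≠ 0 := P.root_ne_zero hα
  have hβ0 : β ≠ 0 := P.root_ne_zero hβ
  have haa : 0 < P.Bf α α := P.Bf_pos hα0
  have hbb : 0 < P.Bf β β := P.Bf_pos hβ0
  have hkey1 : α (P.coroot β) * P.Bf β β = 2 * P.Bf α β := P.apply_coroot_mul_Bf hβ α
  have hkey2 : β (P.coroot α) * P.Bf α α = 2 * P.Bf α β := by
    rw [P.apply_coroot_mul_Bf hα β, P.Bf_symm α β]
  have hcs : (P.Bf α β) ^ 2 < P.Bf α α * P.Bf β β := P.Bf_cauchy_schwarz hα hβ h1 h2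
  have hab : P.Bf α β < 0 := by nlinarith
  have hbneg : β (P.coroot α) < 0 := by nlinarith
  have hprod : α (P.coroot β) * β (P.coroot α) < 4 := by nlinarith
  obtain ⟨na, hna⟩ := P.crystallographic α hα β hβ
  obtain ⟨nb, hnb⟩ := P.crystallographic β hβ α hα
  have hna0 : na ≤ -1 := by
    have : (na : ℝ) < 0 := hna ▸ hneg
    exact_mod_cast Int.lt_add_one_iff.mp (by exact_mod_cast this)
  have hnb0 : nb ≤ -1 := by
    have : (nb : ℝ) < 0 := hnb ▸ hbneg
    exact_mod_cast Int.lt_add_one_iff.mp (by exact_mod_cast this)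
  have hprodZ : na * nb < 4 := by
    have : ((na * nb : ℤ) : ℝ) < 4 := by push_cast; rw [← hna, ← hnb]; exact hprod
    exact_mod_cast this
  have hcase : na = -1 ∨ nb = -1 := by
    by_contra hc
    push_neg at hc
    have h1' : na ≤ -2 := by omega
    have h2' : nb ≤ -2 := by omega
    nlinarith
  rcases hcase with hc | hc
  · have := P.reflect_mem α hα β hβ
    rw [hna, hc] at this
    rw [show (α - ((-1 : ℤ) : ℝ) • β) = α + β by push_cast; module] at this
    exact this
  · have := P.reflect_mem β hβ α hα
    rw [hnb, hc] at this
    rw [show (β - ((-1 : ℤ) : ℝ) • α) = α + β by push_cast; module] at this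
    exact this

lemma apply_sum_coroot {W : Type*} [AddCommGroup W] [Module ℝ W]
    {α γ β : Dual ℝ W} (c : ℝ) (h : α + γ = c • β) (v : W) :
    α v + γ v = c * β v := by
  have := congrArg (fun ψ : Dual ℝ W => ψ v) h
  simpa using this

/-- No two positive roots can sum to a nonpositive multiple of a positive root. -/
lemma no_nonpos_sum {β : Dual ℝ V} (hβ : β ∈ P.pos) :
    ∀ k : ℕ, ∀ α ∈ P.pos, ∀ γ ∈ P.pos, α + γ = -(k : ℝ) • β → False := by
  have hβr : β ∈ P.roots := P.pos_subset hβ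
  intro k
  induction k with
  | zero =>
    intro α hα γ hγ h
    rw [Nat.cast_zero, neg_zero, zero_smul] at h
    have hγα : γ = -α := by
      rw [eq_neg_iff_add_eq_zero, add_comm]
      exact h
    exact P.neg_not_pos α hα (hγα ▸ hγ)
  | succ k ih =>
    intro α hα γ hγ h
    have hsum : α (P.coroot β) + γ (P.coroot β) = -((k : ℝ) + 1) * 2 := by
      have := apply_sum_coroot (-(((k : ℕ) + 1 : ℕ) : ℝ)) h (P.coroot β)
      rw [P.root_coroot_two β hβr] at this
      push_cast at this ⊢
      linarith
    have step : ∀ α' ∈ P.pos, ∀ γ' ∈ P.pos, α' + γ' = -(((k + 1 : ℕ)) : ℝ) • β →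
        α' (P.coroot β) < 0 → False := by
      intro α' hα' γ' hγ' h' ha'
      have hne1 : α' ≠ β := by
        intro hEq
        rw [hEq, P.root_coroot_two β hβr] at ha'
        linarith
      have hne2 : α' ≠ -β := by
        intro hEq
        apply P.neg_not_pos α' hα'
        rw [hEq, neg_neg]
        exact hβ
      have hroot : α' + β ∈ P.roots :=
        P.add_root_of_pairing_neg (P.pos_subset hα') hβr hne1 hne2 ha'
      have hposs : α' + β ∈ P.pos := P.add_mem_pos α' hα' β hβ hroot
      apply ih (α' + β) hposs γ' hγ'
      rw [show (α' + β) + γ' = (α' + γ') + β by abel, h']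
      push_cast
      module
    rcases lt_or_ge (α (P.coroot β)) 0 with ha | ha
    · exact step α hα γ hγ h ha
    · have hc : γ (P.coroot β) < 0 := by linarith
      exact step γ hγ α hα (by rw [add_comm]; exact h) hc

end PosRootSystem

/-- A simple root relative to the positive system: an indecomposable positive root. -/
def PosRootSystem.IsSimpleRoot {V : Type*} [AddCommGroup V] [Module ℝ V]
    (P : PosRootSystem V) (β : Module.Dual ℝ V) : Prop :=
  β ∈ P.pos ∧ ∀ γ ∈ P.pos, ∀ δ ∈ P.pos, β ≠ γ + δ

namespace PosRootSystem

variable {V : Type*} [AddCommGroup V] [Module ℝ V] (P : PosRootSystem V)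

/-- If two positive roots sum to a positive multiple of a simple root `β`, both are `β`. -/
lemma sum_eq_smul_simple {β : Dual ℝ V} (hβs : P.IsSimpleRoot β) :
    ∀ m : ℕ, ∀ α ∈ P.pos, ∀ γ ∈ P.pos, α + γ = ((m + 1 : ℕ) : ℝ) • β →
      α = β ∧ γ = β := by
  have hβ : β ∈ P.pos := hβs.1
  have hβr : β ∈ P.roots := P.pos_subset hβ
  intro m
  induction m with
  | zero =>
    intro α hα γ hγ h
    exfalso
    have h1 : α + γ = β := by rw [h]; norm_num
    exact hβs.2 α hα γ hγ h1.symm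
  | succ m ih =>
    intro α hα γ hγ h
    by_cases hαβ : α = β
    · subst hαβ
      have hγval : γ = ((m + 1 : ℕ) : ℝ) • α := by
        have : γ = ((m + 1 + 1 : ℕ) : ℝ) • α - α := by
          rw [← h]; abel
        rw [this]; push_cast; module
      rcases P.reduced α (P.pos_subset hα) _ (hγval ▸ P.pos_subset hγ) with hc | hc
      · rw [hc, one_smul] at hγval
        exact ⟨rfl, hγval.symm ▸ rfl⟩
      · exfalso
        have : ((m + 1 : ℕ) : ℝ) ≥ 1 := by exact_mod_cast Nat.one_le_iff_ne_zero.2 (by omega)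
        rw [hc] at this
        linarith
    · by_cases hγβ : γ = β
      · subst hγβ
        have hαval : α = ((m + 1 : ℕ) : ℝ) • γ := by
          have : α = ((m + 1 + 1 : ℕ) : ℝ) • γ - γ := by
            rw [← h]; abel
          rw [this]; push_cast; module
        rcases P.reduced γ (P.pos_subset hγ) _ (hαval ▸ P.pos_subset hα) with hc | hc
        · rw [hc, one_smul] at hαval
          exact ⟨hαval, rfl⟩
        · exfalso
          have : ((m + 1 : ℕ) : ℝ) ≥ 1 := by exact_mod_cast Nat.one_le_iff_ne_zero.2 (by omega)
          rw [hc] at this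
          linarith
      · exfalso
        have hsum : α (P.coroot β) + γ (P.coroot β) = ((m + 1 + 1 : ℕ) : ℝ) * 2 := by
          have := apply_sum_coroot (((m + 1 + 1 : ℕ)) : ℝ) h (P.coroot β)
          rw [P.root_coroot_two β hβr] at this
          exact this
        have step : ∀ α' ∈ P.pos, ∀ γ' ∈ P.pos, α' + γ' = ((m + 1 + 1 : ℕ) : ℝ) • β →
            α' ≠ β → γ' ≠ β → 0 < α' (P.coroot β) → False := by
          intro α' hα' γ' hγ' h' hne1 hne2 ha'
          have hnegmem : -α' ∈ P.roots := P.neg_mem_roots (P.pos_subset hα')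
          have hm1 : -α' ≠ β := by
            intro hEq
            exact P.neg_not_pos α' hα' (hEq ▸ hβ)
          have hm2 : -α' ≠ -β := by
            intro hEq
            exact hne1 (neg_injective hEq)
          have hmneg : (-α') (P.coroot β) < 0 := by
            simp only [LinearMap.neg_apply]
            linarith
          have hroot : -α' + β ∈ P.roots :=
            P.add_root_of_pairing_neg hnegmem hβr hm1 hm2 hmneg
          rcases (P.mem_roots_iff _).1 hroot with hp | hp
          · -- β - α' ∈ pos, so β = (β - α') + α' is decomposable
            exact hβs.2 _ hp α' hα' (by abel)
          · -- α' - β ∈ pos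
            rw [neg_add, neg_neg] at hp
            have : (α' - β) + γ' = ((m + 1 : ℕ) : ℝ) • β := by
              rw [show (α' - β) + γ' = (α' + γ') - β by abel, h']
              push_cast
              module
            rcases ih (α' - β) hp γ' hγ' this with ⟨_, hEq⟩
            exact hne2 hEq
        have hcases : 0 < α (P.coroot β) ∨ 0 < γ (P.coroot β) := by
          by_contra hc
          push_neg at hc
          have : ((m + 1 + 1 : ℕ) : ℝ) * 2 ≤ 0 := by
            rw [← hsum]; linarith [hc.1, hc.2]
          have h4 : (0 : ℝ) < ((m + 1 + 1 : ℕ) : ℝ) * 2 := by positivity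
          linarith
        rcases hcases with ha | hc
        · exact step α hα γ hγ h hαβ hγβ ha
        · exact step γ hγ α hα (by rw [add_comm]; exact h) hγβ hαβ hc

/-- The reflection in a simple root permutes the other positive roots. -/
lemma reflect_pos_of_ne {β : Dual ℝ V} (hβs : P.IsSimpleRoot β) {α : Dual ℝ V}
    (hα : α ∈ P.pos) (hne : α ≠ β) : α - α (P.coroot β) • β ∈ P.pos := by
  have hβ : β ∈ P.pos := hβs.1
  have hβr : β ∈ P.roots := P.pos_subset hβ
  have hαr : α ∈ P.roots := P.pos_subset hα
  have hδ : α - α (P.coroot β) • β ∈ P.roots := P.reflect_mem α hαr β hβr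
  rcases (P.mem_roots_iff _).1 hδ with h | h
  · exact h
  · exfalso
    obtain ⟨n, hn⟩ := P.crystallographic α hαr β hβr
    rcases le_or_gt n 0 with hn0 | hn0
    · apply P.no_nonpos_sum hβ (-n).toNat α hα _ h
      have hcast : (((-n).toNat : ℕ) : ℝ) = -(n : ℝ) := by
        have h1 : ((-n).toNat : ℤ) = -n := Int.toNat_of_nonneg (by omega)
        exact_mod_cast congrArg (Int.cast : ℤ → ℝ) h1
      rw [hcast, hn]
      module
    · have hres := P.sum_eq_smul_simple hβs (n.toNat - 1) α hα _ h ?_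
      · exact hne hres.1
      · have hcast : (((n.toNat - 1 + 1 : ℕ)) : ℝ) = (n : ℝ) := by
          have h1 : 1 ≤ n.toNat := by omega
          rw [Nat.sub_add_cancel h1]
          have h2 : (n.toNat : ℤ) = n := Int.toNat_of_nonneg (by omega)
          exact_mod_cast congrArg (Int.cast : ℤ → ℝ) h2
        rw [hcast, hn]
        module


end PosRootSystem


/-- For a simple root `β`: `ℓ^S(s_β λ) = ℓ^S(λ) − 1` if `β(λ) < 0`; `s_β λ = λ` if
`β(λ) = 0`; and `ℓ^S(s_β λ) = ℓ^S(λ) + 1` if `β(λ) > 0`. -/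
theorem lS_sRefl_simple {V : Type*} [AddCommGroup V] [Module ℝ V]
    (P : PosRootSystem V) (β : Module.Dual ℝ V) (hβ : P.IsSimpleRoot β) (x : V)
    (hx : P.IsCoweight x) :
    (β x < 0 → P.lS (P.sRefl β x) = P.lS x - 1) ∧
    (β x = 0 → P.sRefl β x = x) ∧
    (0 < β x → P.lS (P.sRefl β x) = P.lS x + 1) := by
  classical
  have hβpos : β ∈ P.pos := hβ.1
  have hβr : β ∈ P.roots := P.pos_subset hβpos
  have h2 : β (P.coroot β) = 2 := P.root_coroot_two β hβr
  set u : Module.Dual ℝ V → Module.Dual ℝ V :=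
    fun φ => φ - φ (P.coroot β) • β with hu
  have hval : ∀ α : Module.Dual ℝ V, α (P.sRefl β x) = (u α) x := by
    intro α
    simp only [PosRootSystem.sRefl, hu, map_sub, map_smul, smul_eq_mul,
      LinearMap.sub_apply, LinearMap.smul_apply]
    ring
  have huu : ∀ φ, u (u φ) = φ := by
    intro φ
    simp only [hu, map_sub, map_smul, LinearMap.sub_apply, LinearMap.smul_apply,
      smul_eq_mul, h2]
    module
  have hub : u β = -β := by
    simp only [hu, h2]
    module
  have humem : ∀ α ∈ P.pos.erase β, u α ∈ P.pos.erase β := by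
    intro α hαe
    rcases Finset.mem_erase.1 hαe with ⟨hne, hα⟩
    have h1 : u α ∈ P.pos := P.reflect_pos_of_ne hβ hα hne
    refine Finset.mem_erase.2 ⟨?_, h1⟩
    intro hEq
    have hαβ : α = u β := by rw [← hEq, huu]
    rw [hub] at hαβ
    exact P.neg_not_pos β hβpos (hαβ ▸ hα)
  have herase : ∑ α ∈ P.pos.erase β, PosRootSystem.lenAux (α (P.sRefl β x))
      = ∑ α ∈ P.pos.erase β, PosRootSystem.lenAux (α x) := by
    refine Finset.sum_nbij' u u humem humem (fun a _ => huu a) (fun a _ => huu a) ?_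
    intro α _
    rw [hval α]
  have hβterm : β (P.sRefl β x) = -(β x) := by
    rw [hval β, hub]
    simp
  have hkey : P.lS (P.sRefl β x)
      = (∑ α ∈ P.pos.erase β, PosRootSystem.lenAux (α x))
        + PosRootSystem.lenAux (-(β x)) := by
    unfold PosRootSystem.lS
    rw [← Finset.sum_erase_add _ _ hβpos, herase, hβterm]
  have hlsx : P.lS x
      = (∑ α ∈ P.pos.erase β, PosRootSystem.lenAux (α x))
        + PosRootSystem.lenAux (β x) := by
    unfold PosRootSystem.lS
    rw [← Finset.sum_erase_add _ _ hβpos]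
  refine ⟨?_, ?_, ?_⟩
  · intro hneg
    rw [hkey, hlsx]
    unfold PosRootSystem.lenAux
    rw [if_neg (by linarith), if_pos (le_of_lt hneg)]
    ring
  · intro h0
    show x - β x • P.coroot β = x
    rw [h0, zero_smul, sub_zero]
  · intro hpos
    rw [hkey, hlsx]
    unfold PosRootSystem.lenAux
    rw [if_pos (by linarith), if_neg (not_le.2 hpos)]
    ring
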